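/- For every finite simple graph G with no isolated vertex, the double domination number satisfies γ×2(G) ≤ α(G) + γ(G), where α(G) is the independence number and γ(G) is the domination number. -/

import Mathlib

/-! Basic domination-type definitions for finite simple graphs. -/

variable {V : Type*}

/-- The closed neighbourhood `N[v] = N(v) ∪ {v}`. -/
def closedNbhd (G : SimpleGraph V) (v : V) : Set V := insert v (G.neighborSet v)

/-- `D` is a dominating set: every vertex outside `D` has a neighbour in `D`. -/
def IsDomSet (G : SimpleGraph V) (D : Set V) : Prop := ∀ v ∉ D, ∃ u ∈ D, G.Adj u v

/-- `D` is a double dominating set: `|N[v] ∩ D| ≥ 2` for every vertex `v`. -/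
def IsDoubleDomSet (G : SimpleGraph V) (D : Set V) : Prop :=
  ∀ v : V, 2 ≤ (closedNbhd G v ∩ D).ncard

/-- `D` is a 2-dominating set: every vertex outside `D` has ≥ 2 neighbours in `D`. -/
def IsTwoDomSet (G : SimpleGraph V) (D : Set V) : Prop :=
  ∀ v ∉ D, 2 ≤ (G.neighborSet v ∩ D).ncard

/-- `D` is a total dominating set: every vertex has a neighbour in `D`. -/
def IsTotalDomSet (G : SimpleGraph V) (D : Set V) : Prop := ∀ v : V, ∃ u ∈ D, G.Adj u v

/-- `S` is an independent set: no two vertices of `S` are adjacent. -/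
def IsIndepSet' (G : SimpleGraph V) (S : Set V) : Prop := ∀ u ∈ S, ∀ v ∈ S, ¬ G.Adj u v

/-- `C` is a vertex cover: every edge has an endpoint in `C`. -/
def IsVertexCover (G : SimpleGraph V) (C : Set V) : Prop := ∀ u v, G.Adj u v → u ∈ C ∨ v ∈ C

/-- The domination number `γ(G)`. -/
noncomputable def domNum (G : SimpleGraph V) : ℕ :=
  sInf {k | ∃ D : Set V, IsDomSet G D ∧ D.ncard = k}

/-- The double domination number `γ×2(G)`. -/
noncomputable def ddomNum (G : SimpleGraph V) : ℕ :=
  sInf {k | ∃ D : Set V, IsDoubleDomSet G D ∧ D.ncard = k}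

/-- The 2-domination number `γ₂(G)`. -/
noncomputable def twoDomNum (G : SimpleGraph V) : ℕ :=
  sInf {k | ∃ D : Set V, IsTwoDomSet G D ∧ D.ncard = k}

/-- The total domination number `γt(G)`. -/
noncomputable def totalDomNum (G : SimpleGraph V) : ℕ :=
  sInf {k | ∃ D : Set V, IsTotalDomSet G D ∧ D.ncard = k}

/-- The vertex cover number `β(G)`. -/
noncomputable def vcNum (G : SimpleGraph V) : ℕ :=
  sInf {k | ∃ C : Set V, IsVertexCover G C ∧ C.ncard = k}

/-- The independence number `α(G)`. -/
noncomputable def indepNum (G : SimpleGraph V) : ℕ :=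
  sSup {k | ∃ S : Set V, IsIndepSet' G S ∧ S.ncard = k}

/-- The independent domination number `i(G)`. -/
noncomputable def indepDomNum (G : SimpleGraph V) : ℕ :=
  sInf {k | ∃ S : Set V, IsIndepSet' G S ∧ IsDomSet G S ∧ S.ncard = k}

/-- The set of leaves (vertices of degree one). -/
def leafSet (G : SimpleGraph V) : Set V := {v | (G.neighborSet v).ncard = 1}

/-- The set of support vertices (vertices adjacent to a leaf). -/
def supportSet (G : SimpleGraph V) : Set V := {v | ∃ u, G.Adj v u ∧ u ∈ leafSet G}

/-- For every finite simple graph `G` with no isolated vertex,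
`γ×2(G) ≤ α(G) + γ(G)`. -/
theorem stmt0 {V : Type*} [Fintype V] (G : SimpleGraph V)
    (hiso : ∀ v : V, ∃ u : V, G.Adj v u) :
    ddomNum G ≤ indepNum G + domNum G := by
  classical
  -- a minimum dominating set
  have hDne : {k | ∃ D : Set V, IsDomSet G D ∧ D.ncard = k}.Nonempty :=
    ⟨(Set.univ : Set V).ncard, Set.univ, fun v hv => absurd (Set.mem_univ v) hv, rfl⟩
  obtain ⟨D, hD, hDcard⟩ : ∃ D : Set V, IsDomSet G D ∧ D.ncard = domNum G :=
    Nat.sInf_mem hDne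
  -- a maximal independent subset of Dᶜ
  set 𝒜 : Set (Set V) := {A | A ⊆ Dᶜ ∧ IsIndepSet' G A} with h𝒜
  have hemptyA : (∅ : Set V) ∈ 𝒜 :=
    ⟨Set.empty_subset _, fun u hu => absurd hu (Set.notMem_empty u)⟩
  obtain ⟨I, hI𝒜, hImax⟩ := Set.Finite.exists_maximalFor id 𝒜 (Set.toFinite 𝒜) ⟨∅, hemptyA⟩
  simp only [id] at hImax
  obtain ⟨hIsub, hIind⟩ := hI𝒜
  -- maximality: every vertex outside D ∪ I has a neighbour in I
  have hImax' : ∀ v : V, v ∉ D → v ∉ I → ∃ i ∈ I, G.Adj v i := by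
    intro v hvD hvI
    by_contra h
    push_neg at h
    have hins : insert v I ∈ 𝒜 := by
      constructor
      · exact Set.insert_subset hvD hIsub
      · intro a ha b hb hab
        rcases ha with rfl | ha
        · rcases hb with rfl | hb
          · exact G.loopless.irrefl _ hab
          · exact h b hb hab
        · rcases hb with rfl | hb
          · exact h a ha hab.symm
          · exact hIind a ha b hb hab
    have := hImax hins (Set.subset_insert v I)
    exact hvI (this (Set.mem_insert v I))
  -- the bad vertices of D and chosen neighbours
  set B : Set V := {d | d ∈ D ∧ ∀ u, G.Adj d u → u ∉ D ∧ u ∉ I} with hB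
  have hBD : B ⊆ D := fun d hd => hd.1
  set f : V → V := fun v => (hiso v).choose with hf
  have hfadj : ∀ v, G.Adj v (f v) := fun v => (hiso v).choose_spec
  set X : Set V := I ∪ D ∪ f '' B with hX
  -- helper
  have htwo : ∀ (v a b : V), a ∈ closedNbhd G v → b ∈ closedNbhd G v → a ∈ X → b ∈ X →
      a ≠ b → 2 ≤ (closedNbhd G v ∩ X).ncard := by
    intro v a b ha hb haX hbX hab
    have : 1 < (closedNbhd G v ∩ X).ncard :=
      (Set.one_lt_ncard_iff (Set.toFinite _)).2 ⟨a, b, ⟨ha, haX⟩, ⟨hb, hbX⟩, hab⟩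
    exact this
  -- X is a double dominating set
  have hXdd : IsDoubleDomSet G X := by
    intro v
    by_cases hvI : v ∈ I
    · -- v ∈ I : v itself plus a D-neighbour
      have hvD : v ∉ D := hIsub hvI
      obtain ⟨u, huD, huv⟩ := hD v hvD
      refine htwo v v u (Set.mem_insert _ _) (Set.mem_insert_of_mem _ huv.symm)
        (Or.inl (Or.inl hvI)) (Or.inl (Or.inr huD)) ?_
      rintro rfl; exact hvD huD
    · by_cases hvD : v ∈ D
      · by_cases hvB : v ∈ B
        · -- bad vertex: v plus its chosen neighbour f v
          refine htwo v v (f v) (Set.mem_insert _ _) (Set.mem_insert_of_mem _ (hfadj v))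
            (Or.inl (Or.inr hvD)) (Or.inr ⟨v, hvB, rfl⟩) (G.ne_of_adj (hfadj v))
        · -- non-bad vertex of D : v plus a neighbour in D ∪ I
          have : ∃ u, G.Adj v u ∧ (u ∈ D ∨ u ∈ I) := by
            by_contra h
            push_neg at h
            exact hvB ⟨hvD, h⟩
          obtain ⟨u, huv, hu⟩ := this
          refine htwo v v u (Set.mem_insert _ _) (Set.mem_insert_of_mem _ huv)
            (Or.inl (Or.inr hvD)) ?_ (G.ne_of_adj huv)
          rcases hu with h1 | h1
          · exact Or.inl (Or.inr h1)
          · exact Or.inl (Or.inl h1)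
      · -- v outside I ∪ D : a D-neighbour and an I-neighbour, necessarily distinct
        obtain ⟨d, hdD, hdv⟩ := hD v hvD
        obtain ⟨i, hiI, hiv⟩ := hImax' v hvD hvI
        refine htwo v i d (Set.mem_insert_of_mem _ hiv) (Set.mem_insert_of_mem _ hdv.symm)
          (Or.inl (Or.inl hiI)) (Or.inl (Or.inr hdD)) ?_
        rintro rfl; exact (hIsub hiI) hdD
  -- I ∪ B is independent
  have hIBind : IsIndepSet' G (I ∪ B) := by
    rintro a (haI | haB) b (hbI | hbB) hab
    · exact hIind a haI b hbI hab
    · exact (hbB.2 a hab.symm).2 haI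
    · exact (haB.2 b hab).2 hbI
    · exact (haB.2 b hab).1 (hBD hbB)
  have hIBdisj : Disjoint I B := by
    rw [Set.disjoint_left]
    intro a haI haB
    exact (hIsub haI) (hBD haB)
  -- size computations
  have hbdd : BddAbove {k | ∃ S : Set V, IsIndepSet' G S ∧ S.ncard = k} := by
    refine ⟨Fintype.card V, ?_⟩
    rintro k ⟨S, _, rfl⟩
    calc S.ncard ≤ (Set.univ : Set V).ncard :=
          Set.ncard_le_ncard (Set.subset_univ _) Set.finite_univ
      _ = Fintype.card V := by rw [Set.ncard_univ, Nat.card_eq_fintype_card]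
  have hIB : (I ∪ B).ncard ≤ indepNum G :=
    le_csSup hbdd ⟨I ∪ B, hIBind, rfl⟩
  have hXcard : X.ncard ≤ indepNum G + domNum G := by
    have e1 : X = (I ∪ f '' B) ∪ D := by
      rw [hX, Set.union_right_comm]
    calc X.ncard ≤ (I ∪ f '' B).ncard + D.ncard := by
          rw [e1]; exact Set.ncard_union_le _ _
      _ ≤ (I.ncard + (f '' B).ncard) + D.ncard := by
          exact Nat.add_le_add_right (Set.ncard_union_le _ _) _
      _ ≤ (I.ncard + B.ncard) + D.ncard := by
          exact Nat.add_le_add_right (Nat.add_le_add_left (Set.ncard_image_le (Set.toFinite _)) _) _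
      _ = (I ∪ B).ncard + D.ncard := by
          rw [Set.ncard_union_eq hIBdisj]
      _ ≤ indepNum G + domNum G := by
          rw [hDcard]; exact Nat.add_le_add_right hIB _
  calc ddomNum G ≤ X.ncard := Nat.sInf_le ⟨X, hXdd, rfl⟩
    _ ≤ indepNum G + domNum G := hXcard
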